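/- Let 𝔓 be a Lie algebra of polynomial vector fields on ℝ^n (n ≥ 2) containing all constant fields and the Euler field E, with every element of [𝔓₁,𝔓_{−1}] lying in [𝔓₀,𝔓₀]. Then every quasiderivation (f,f,g) of degree 0 with f(E) = 0 has the form (L_X, L_X, L_X + k), where X is a homogeneous degree-0 vector field in 𝔥₀, L_X = [X,·], and k is an endomorphism of 𝔓 vanishing on 𝔓_i for i ≠ 0 and on 𝔓₀ ∩ [𝔓,𝔓], arbitrary on a complement of 𝔓₀ ∩ [𝔓,𝔓] in 𝔓₀. -/

import Mathlib

open MvPolynomial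

/-- Polynomial vector fields on ℝⁿ, given by their polynomial components. -/
abbrev PVF (n : ℕ) : Type := Fin n → MvPolynomial (Fin n) ℝ

/-- The Lie bracket of polynomial vector fields:
`[X,Y]^j = Σ_i (X^i ∂(Y^j)/∂x^i − Y^i ∂(X^j)/∂x^i)`. -/
noncomputable def vbracket {n : ℕ} (X Y : PVF n) : PVF n :=
  fun j => ∑ i : Fin n, (X i * pderiv i (Y j) - Y i * pderiv i (X j))

/-- The Euler vector field `E = Σ_i x^i ∂/∂x^i`. -/
noncomputable def eulerVF (n : ℕ) : PVF n := fun j => MvPolynomial.X j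

/-- The constant vector field `∂/∂x^i`. -/
noncomputable def constVF {n : ℕ} (i : Fin n) : PVF n := fun j => if j = i then 1 else 0

/-- A polynomial vector field is homogeneous of degree `i` (an element of `𝔥_i`)
if all its components are homogeneous polynomials of degree `i+1` (the zero field
is homogeneous of every degree). -/
def IsHomog {n : ℕ} (i : ℤ) (X : PVF n) : Prop :=
  (∃ d : ℕ, (d : ℤ) = i + 1 ∧ ∀ k, (X k).IsHomogeneous d) ∨ X = 0

section Basics
variable {n : ℕ}

lemma pderiv_comm' (i j : Fin n) (p : MvPolynomial (Fin n) ℝ) :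
    pderiv i (pderiv j p) = pderiv j (pderiv i p) := by
  induction p using MvPolynomial.induction_on with
  | C a => simp
  | add p q hp hq => simp [hp, hq]
  | mul_X p k hp =>
    by_cases hik : k = i <;> by_cases hjk : k = j <;>
      simp [pderiv_mul, hp, pderiv_X, hik, hjk, Pi.single_apply] <;>
      split_ifs <;> simp_all <;> ring

lemma degree_eq_sum_univ (u : Fin n →₀ ℕ) : u.degree = ∑ i : Fin n, u i := by
  rw [Finsupp.degree]
  exact Finset.sum_subset (Finset.subset_univ _)
    (fun x _ hx => Finsupp.notMem_support_iff.mp hx)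

lemma sub_single_add {u : Fin n →₀ ℕ} {i : Fin n} (h : 0 < u i) :
    (u - Finsupp.single i 1) + Finsupp.single i 1 = u := by
  ext k
  rcases eq_or_ne k i with rfl | hk
  · simp only [Finsupp.add_apply, Finsupp.tsub_apply, Finsupp.single_eq_same]
    omega
  · simp [Finsupp.add_apply, Finsupp.tsub_apply,
      Finsupp.single_eq_of_ne' (Ne.symm hk)]

lemma homog_eq_C {p : MvPolynomial (Fin n) ℝ} (hp : p.IsHomogeneous 0) :
    p = C (coeff 0 p) := by
  ext u
  rcases eq_or_ne u 0 with h | h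
  · simp [h]
  · rw [hp.coeff_eq_zero (by simpa [Finsupp.degree_eq_zero_iff] using h), coeff_C,
      if_neg (by exact fun hu => h hu.symm)]

lemma degree_of_mem_support {p : MvPolynomial (Fin n) ℝ} {d : ℕ} (hp : p.IsHomogeneous d)
    {u : Fin n →₀ ℕ} (hu : u ∈ p.support) : u.degree = d := by
  have := hp (mem_support_iff.mp hu)
  exact (DFunLike.congr_fun Finsupp.degree_eq_weight_one u).trans this

lemma pderiv_isHomogeneous {p : MvPolynomial (Fin n) ℝ} {d : ℕ} (i : Fin n)
    (hp : p.IsHomogeneous (d + 1)) : (pderiv i p).IsHomogeneous d := by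
  rw [p.as_sum, map_sum]
  apply IsHomogeneous.sum
  intro u hu
  rw [pderiv_monomial]
  rcases Nat.eq_zero_or_pos (u i) with h0 | h0
  · rw [h0]
    simp only [Nat.cast_zero, mul_zero, monomial_zero]
    exact isHomogeneous_zero _ _ _
  · apply isHomogeneous_monomial
    have hud : u.degree = d + 1 := degree_of_mem_support hp hu
    have h2 : (u - Finsupp.single i 1) + Finsupp.single i 1 = u := sub_single_add h0
    have hdeg : (u - Finsupp.single i 1).degree + (Finsupp.single i 1).degree = u.degree := by
      rw [degree_eq_sum_univ, degree_eq_sum_univ, degree_eq_sum_univ, ← Finset.sum_add_distrib]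
      exact Finset.sum_congr rfl (fun k _ => by
        rw [← Finsupp.add_apply, h2])
    have hsing : (Finsupp.single i 1 : Fin n →₀ ℕ).degree = 1 := by
      rw [Finsupp.degree_single]
    omega

lemma euler_mono (u : Fin n →₀ ℕ) (c : ℝ) :
    ∑ i : Fin n, X i * pderiv i (monomial u c) = (u.degree : ℝ) • monomial u c := by
  have key : ∀ i : Fin n, X i * pderiv i (monomial u c)
      = ((u i : ℝ)) • monomial u c := by
    intro i
    rw [pderiv_monomial]
    rcases Nat.eq_zero_or_pos (u i) with h0 | h0
    · rw [h0]; simp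
    · rw [← pow_one (X i : MvPolynomial (Fin n) ℝ), ← monomial_single_add,
        show (Finsupp.single i 1) + (u - Finsupp.single i 1) = u from by
          rw [add_comm]; exact sub_single_add h0,
        smul_monomial, smul_eq_mul, mul_comm]
  rw [Finset.sum_congr rfl (fun i _ => key i), ← Finset.sum_smul, degree_eq_sum_univ,
    Nat.cast_sum]

lemma euler_identity {p : MvPolynomial (Fin n) ℝ} {d : ℕ} (hp : p.IsHomogeneous d) :
    ∑ i : Fin n, X i * pderiv i p = (d : ℝ) • p := by
  calc ∑ i : Fin n, X i * pderiv i p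
      = ∑ i : Fin n, ∑ v ∈ p.support, X i * pderiv i (monomial v (coeff v p)) := by
        refine Finset.sum_congr rfl (fun i _ => ?_)
        conv_lhs => rw [p.as_sum]
        rw [map_sum, Finset.mul_sum]
    _ = ∑ v ∈ p.support, ∑ i : Fin n, X i * pderiv i (monomial v (coeff v p)) :=
        Finset.sum_comm
    _ = ∑ v ∈ p.support, (d : ℝ) • monomial v (coeff v p) := by
        refine Finset.sum_congr rfl (fun v hv => ?_)
        rw [euler_mono, degree_of_mem_support hp hv]
    _ = (d : ℝ) • p := by rw [← Finset.smul_sum, ← p.as_sum]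

lemma homog_pos_pderiv_zero {p : MvPolynomial (Fin n) ℝ} {d : ℕ} (hd : d ≠ 0)
    (hp : p.IsHomogeneous d) (hz : ∀ i, pderiv i p = 0) : p = 0 := by
  have := euler_identity hp
  rw [Finset.sum_congr rfl (fun i _ => by rw [hz i, mul_zero])] at this
  rw [Finset.sum_const_zero] at this
  have hd' : (d : ℝ) ≠ 0 := Nat.cast_ne_zero.mpr hd
  calc p = (d:ℝ)⁻¹ • ((d:ℝ) • p) := (inv_smul_smul₀ hd' p).symm
  _ = 0 := by rw [← this, smul_zero]
end Basics

section Bracket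
variable {n : ℕ}

/-- Directional derivative operator. -/
noncomputable def Dop (X Y : PVF n) : PVF n := fun j => ∑ i : Fin n, X i * pderiv i (Y j)

noncomputable def Aop (X Y Z : PVF n) : PVF n :=
  fun j => ∑ i : Fin n, ∑ k : Fin n, X i * pderiv i (Y k) * pderiv k (Z j)

noncomputable def Sop (X Y Z : PVF n) : PVF n :=
  fun j => ∑ i : Fin n, ∑ k : Fin n, X i * Y k * pderiv i (pderiv k (Z j))

lemma vbracket_apply (X Y : PVF n) (j : Fin n) :
    vbracket X Y j = Dop X Y j - Dop Y X j := by
  simp [vbracket, Dop, Finset.sum_sub_distrib]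

lemma Dop_sub_right (X U V : PVF n) (j : Fin n) :
    Dop X (fun m => U m - V m) j = Dop X U j - Dop X V j := by
  simp [Dop, mul_sub, Finset.sum_sub_distrib]

lemma Dop_sub_left (U V X : PVF n) (j : Fin n) :
    Dop (fun m => U m - V m) X j = Dop U X j - Dop V X j := by
  simp [Dop, sub_mul, Finset.sum_sub_distrib]

lemma Dop_Dop (X Y Z : PVF n) (j : Fin n) :
    Dop X (Dop Y Z) j = Aop X Y Z j + Sop X Y Z j := by
  simp only [Dop, Aop, Sop, map_sum, pderiv_mul, Finset.mul_sum, mul_add,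
    ← Finset.sum_add_distrib]
  refine Finset.sum_congr rfl fun i _ => Finset.sum_congr rfl fun k _ => ?_
  ring

lemma Dop_of_Dop (X Y Z : PVF n) (j : Fin n) :
    Dop (Dop Y Z) X j = Aop Y Z X j := by
  simp only [Dop, Aop, Finset.sum_mul]
  rw [Finset.sum_comm]

lemma Sop_symm (X Y Z : PVF n) (j : Fin n) : Sop X Y Z j = Sop Y X Z j := by
  simp only [Sop]
  rw [Finset.sum_comm]
  refine Finset.sum_congr rfl fun i _ => Finset.sum_congr rfl fun k _ => ?_
  rw [pderiv_comm']
  ring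

/-- Leibniz identity: `ad X` is a derivation of the bracket. -/
lemma vbracket_leibniz (X Y Z : PVF n) :
    vbracket X (vbracket Y Z)
      = vbracket (vbracket X Y) Z + vbracket Y (vbracket X Z) := by
  funext j
  have hYZ : vbracket Y Z = fun m => Dop Y Z m - Dop Z Y m := funext (vbracket_apply Y Z)
  have hXY : vbracket X Y = fun m => Dop X Y m - Dop Y X m := funext (vbracket_apply X Y)
  have hXZ : vbracket X Z = fun m => Dop X Z m - Dop Z X m := funext (vbracket_apply X Z)
  rw [Pi.add_apply, vbracket_apply, vbracket_apply, vbracket_apply, hYZ, hXY, hXZ,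
    Dop_sub_right, Dop_sub_left, Dop_sub_right, Dop_sub_left, Dop_sub_right, Dop_sub_left,
    Dop_Dop, Dop_Dop, Dop_Dop, Dop_Dop, Dop_Dop, Dop_Dop,
    Dop_of_Dop, Dop_of_Dop, Dop_of_Dop, Dop_of_Dop, Dop_of_Dop, Dop_of_Dop,
    Sop_symm X Y Z, Sop_symm X Z Y, Sop_symm Z Y X]
  ring

/-- The bracket as a linear map in the second argument. -/
noncomputable def adV (X : PVF n) : PVF n →ₗ[ℝ] PVF n where
  toFun Y := vbracket X Y
  map_add' Y Z := by
    funext j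
    simp only [vbracket, Pi.add_apply, add_mul]
    rw [← Finset.sum_add_distrib]
    refine Finset.sum_congr rfl fun i _ => ?_
    rw [map_add, mul_add]
    ring
  map_smul' r Y := by
    funext j
    simp only [vbracket, Pi.smul_apply, RingHom.id_apply, smul_eq_C_mul, pderiv_C_mul,
      Finset.mul_sum]
    refine Finset.sum_congr rfl fun i _ => ?_
    ring

lemma adV_apply (X Y : PVF n) : adV X Y = vbracket X Y := rfl

lemma vbracket_const (X : PVF n) (i j : Fin n) :
    vbracket X (constVF i) j = - pderiv i (X j) := by
  have h1 : ∀ k : Fin n, pderiv k ((if j = i then 1 else 0 : MvPolynomial (Fin n) ℝ)) = 0 :=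
    fun k => by split_ifs <;> simp
  simp only [vbracket, constVF, h1, mul_zero, zero_sub, ← Finset.sum_neg_distrib]
  simp [ite_mul, Finset.sum_ite_eq']

lemma vbracket_euler_left {X : PVF n} {d : ℕ} (hX : ∀ k, (X k).IsHomogeneous d) :
    vbracket (eulerVF n) X = ((d : ℝ) - 1) • X := by
  funext j
  rw [Pi.smul_apply]
  simp only [vbracket, eulerVF]
  rw [Finset.sum_sub_distrib, euler_identity (hX j)]
  have : ∑ i : Fin n, X i * pderiv i (MvPolynomial.X j : MvPolynomial (Fin n) ℝ) = X j := by
    simp [pderiv_X, Pi.single_apply, mul_ite, Finset.sum_ite_eq]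
  rw [this, sub_smul, one_smul]

end Bracket

section Homog
variable {n : ℕ}

lemma comps_homog {i : ℤ} {X : PVF n} (h : IsHomog i X) {d : ℕ} (hd : (d : ℤ) = i + 1) :
    ∀ k, (X k).IsHomogeneous d := by
  rcases h with ⟨d', hd', h'⟩ | rfl
  · have : d' = d := by omega
    exact this ▸ h'
  · exact fun k => isHomogeneous_zero _ _ _

lemma homog_of_comps {i : ℤ} {X : PVF n} {d : ℕ} (hd : (d : ℤ) = i + 1)
    (h : ∀ k, (X k).IsHomogeneous d) : IsHomog i X := Or.inl ⟨d, hd, h⟩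

lemma mul_pderiv_homog {p q : MvPolynomial (Fin n) ℝ} {a b e : ℕ} (i : Fin n)
    (hab : a + b = e + 1) (hp : p.IsHomogeneous a) (hq : q.IsHomogeneous b) :
    (p * pderiv i q).IsHomogeneous e := by
  cases b with
  | zero =>
    rw [homog_eq_C hq, pderiv_C, mul_zero]
    exact isHomogeneous_zero _ _ _
  | succ b' =>
    have h1 := hp.mul (pderiv_isHomogeneous i hq)
    have he : a + b' = e := by omega
    exact he ▸ h1

lemma vbracket_comps_homog {X Y : PVF n} {a b e : ℕ} (hab : a + b = e + 1)
    (hX : ∀ k, (X k).IsHomogeneous a) (hY : ∀ k, (Y k).IsHomogeneous b) :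
    ∀ j, ((vbracket X Y) j).IsHomogeneous e := by
  intro j
  refine IsHomogeneous.sum _ _ _ fun i _ => ?_
  exact (mul_pderiv_homog i hab (hX i) (hY j)).sub
    (mul_pderiv_homog i (by omega) (hY i) (hX j))

lemma eig_mem {M : Type*} [AddCommGroup M] [Module ℝ M] (P : Submodule ℝ M)
    (L : M →ₗ[ℝ] M) (hL : ∀ x ∈ P, L x ∈ P) :
    ∀ (N : ℕ) (s : Finset ℕ), s.card = N → ∀ (v : ℕ → M) (c : ℕ → ℝ),
      Set.InjOn c s → (∀ d ∈ s, L (v d) = c d • v d) → (∑ d ∈ s, v d) ∈ P →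
      ∀ d ∈ s, v d ∈ P := by
  intro N
  induction N with
  | zero =>
    intro s hs v c _ _ _ d hd
    rw [Finset.card_eq_zero] at hs
    subst hs
    simp at hd
  | succ N ih =>
    intro s hs v c hinj hv hsum d hd
    obtain ⟨m, hm⟩ : s.Nonempty := Finset.card_pos.mp (by omega)
    set t := s.erase m with ht
    have hts : t ⊆ s := Finset.erase_subset _ _
    have htc : t.card = N := by
      rw [ht, Finset.card_erase_of_mem hm, hs]
      omega
    have hsplit : ∑ d ∈ s, v d = v m + ∑ d ∈ t, v d := (Finset.add_sum_erase s v hm).symm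
    have hLsum : L (∑ d ∈ s, v d) = ∑ d ∈ s, c d • v d := by
      rw [map_sum]; exact Finset.sum_congr rfl hv
    have hw : (∑ d ∈ t, (c d - c m) • v d) ∈ P := by
      have h1 : L (∑ d ∈ s, v d) - c m • (∑ d ∈ s, v d) ∈ P :=
        P.sub_mem (hL _ hsum) (P.smul_mem _ hsum)
      have h2 : L (∑ d ∈ s, v d) - c m • (∑ d ∈ s, v d) = ∑ d ∈ t, (c d - c m) • v d := by
        rw [hLsum, Finset.smul_sum, ← Finset.sum_sub_distrib,
          Finset.sum_congr rfl (fun d _ => (sub_smul (c d) (c m) (v d)).symm),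
          ← Finset.add_sum_erase s _ hm, sub_self, zero_smul, zero_add]
      rwa [h2] at h1
    have hvt : ∀ d ∈ t, v d ∈ P := by
      intro e het
      have hem : e ≠ m := (Finset.mem_erase.mp het).1
      have hcne : c e - c m ≠ 0 := sub_ne_zero.mpr fun hce =>
        hem (hinj (hts het) hm hce)
      have hwd := ih t htc (fun d => (c d - c m) • v d) c
        (hinj.mono (Finset.coe_subset.mpr hts))
        (fun d hdt => by
          rw [map_smul, hv d (hts hdt), smul_comm])
        hw e het
      have : v e = (c e - c m)⁻¹ • ((c e - c m) • v e) := (inv_smul_smul₀ hcne (v e)).symm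
      rw [this]
      exact P.smul_mem _ hwd
    rcases eq_or_ne d m with rfl | hdm
    · have hvm : v d = (∑ e ∈ s, v e) - ∑ e ∈ t, v e := by rw [hsplit]; abel
      rw [hvm]
      exact P.sub_mem hsum (Submodule.sum_mem P hvt)
    · exact hvt d (Finset.mem_erase.mpr ⟨hdm, hd⟩)

lemma sum_homogComp_of_le {p : MvPolynomial (Fin n) ℝ} {N : ℕ} (h : p.totalDegree ≤ N) :
    ∑ d ∈ Finset.range (N + 1), homogeneousComponent d p = p := by
  have hsub : Finset.range (p.totalDegree + 1) ⊆ Finset.range (N + 1) :=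
    Finset.range_subset_range.mpr (Nat.succ_le_succ h)
  have hzero : ∀ d ∈ Finset.range (N + 1), d ∉ Finset.range (p.totalDegree + 1) →
      homogeneousComponent d p = 0 := fun d _ hd => by
    have hd' : p.totalDegree + 1 ≤ d := by simpa [Finset.mem_range, not_lt] using hd
    exact homogeneousComponent_eq_zero d p (by omega)
  rw [← Finset.sum_subset hsub hzero, sum_homogeneousComponent]

end Homog

theorem qder0_is_inner_plus_k (n : ℕ) (hn : 2 ≤ n) (P : Submodule ℝ (PVF n))
    (hE : eulerVF n ∈ P)
    (hconst : ∀ i : Fin n, constVF i ∈ P)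
    (hbr : ∀ X ∈ P, ∀ Y ∈ P, vbracket X Y ∈ P)
    (h11 : ∀ X ∈ P, IsHomog 1 X → ∀ Y ∈ P, IsHomog (-1) Y →
      ∃ A ∈ P, ∃ B ∈ P, IsHomog 0 A ∧ IsHomog 0 B ∧ vbracket X Y = vbracket A B)
    (f g : PVF n →ₗ[ℝ] PVF n)
    (hfP : ∀ X ∈ P, f X ∈ P) (hgP : ∀ X ∈ P, g X ∈ P)
    (hf0 : ∀ i : ℤ, ∀ X ∈ P, IsHomog i X → IsHomog i (f X))
    (hg0 : ∀ i : ℤ, ∀ X ∈ P, IsHomog i X → IsHomog i (g X))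
    (hqd : ∀ X ∈ P, ∀ Y ∈ P, vbracket (f X) Y + vbracket X (f Y) = g (vbracket X Y))
    (hfE : f (eulerVF n) = 0) :
    ∃ X₀ : PVF n, IsHomog 0 X₀ ∧
      (∀ Z ∈ P, f Z = vbracket X₀ Z) ∧
      (∀ i : ℤ, i ≠ 0 → ∀ Z ∈ P, IsHomog i Z → g Z = vbracket X₀ Z) ∧
      (∀ Z ∈ P, ∀ W ∈ P, g (vbracket Z W) = vbracket X₀ (vbracket Z W)) := by
  classical
  set X₀ : PVF n :=
    fun j => -∑ m : Fin n, C (coeff 0 (f (constVF m) j)) * MvPolynomial.X m with hX₀def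
  have hconstc : ∀ (i : Fin n) k, ((constVF i) k).IsHomogeneous 0 := by
    intro i k
    simp only [constVF]
    split_ifs
    · exact isHomogeneous_one _ _
    · exact isHomogeneous_zero _ _ _
  have hconstHomog : ∀ i : Fin n, IsHomog (-1) (constVF i) :=
    fun i => homog_of_comps (by norm_num) (hconstc i)
  have hX₀c : ∀ k, (X₀ k).IsHomogeneous 1 := by
    intro k
    rw [hX₀def]
    exact (IsHomogeneous.sum _ _ _ fun m _ => isHomogeneous_C_mul_X _ _).neg
  have hX₀homog : IsHomog 0 X₀ := homog_of_comps (by norm_num) hX₀c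
  have hfconstC : ∀ (i : Fin n) j, f (constVF i) j = C (coeff 0 (f (constVF i) j)) := by
    intro i j
    exact homog_eq_C (comps_homog (hf0 (-1) _ (hconst i) (hconstHomog i)) (by norm_num) j)
  have hbrX₀const : ∀ i : Fin n, vbracket X₀ (constVF i) = f (constVF i) := by
    intro i
    funext j
    rw [vbracket_const X₀ i j]
    have hpd : pderiv i (X₀ j) = -C (coeff 0 (f (constVF i) j)) := by
      rw [hX₀def]
      simp [pderiv_C_mul, pderiv_X, Pi.single_apply, mul_ite, Finset.sum_ite_eq]
    rw [hpd, neg_neg]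
    exact (hfconstC i j).symm
  have hfneg1 : ∀ Y : PVF n, (∀ k, (Y k).IsHomogeneous 0) → f Y = vbracket X₀ Y := by
    intro Y hY
    have hdec : Y = ∑ i : Fin n, (coeff 0 (Y i)) • constVF i := by
      funext j
      rw [Finset.sum_apply]
      have : ∀ i : Fin n, (coeff 0 (Y i)) • constVF i j
          = if j = i then C (coeff 0 (Y i)) else 0 := by
        intro i
        simp only [constVF, smul_ite, smul_eq_C_mul, mul_one, mul_zero, smul_zero]
      simp only [Pi.smul_apply]
      rw [Finset.sum_congr rfl fun i (_ : i ∈ Finset.univ) => this i, Finset.sum_ite_eq]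
      simp only [Finset.mem_univ, if_true]
      exact homog_eq_C (hY j)
    calc f Y = ∑ i : Fin n, (coeff 0 (Y i)) • f (constVF i) := by
          conv_lhs => rw [hdec]
          rw [map_sum]
          exact Finset.sum_congr rfl fun i _ => by rw [map_smul]
    _ = ∑ i : Fin n, (coeff 0 (Y i)) • adV X₀ (constVF i) := by
          refine Finset.sum_congr rfl fun i _ => ?_
          rw [adV_apply, hbrX₀const i]
    _ = vbracket X₀ Y := by
          rw [Finset.sum_congr rfl fun i (_ : i ∈ Finset.univ) =>
              (map_smul (adV X₀) (coeff 0 (Y i)) (constVF i)).symm,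
            ← map_sum, ← hdec, adV_apply]
  -- g = f on homogeneous elements of vf-degree ≠ 0
  have hgfd : ∀ d : ℕ, d ≠ 1 → ∀ Y ∈ P, (∀ k, (Y k).IsHomogeneous d) → g Y = f Y := by
    intro d hd Y hYP hY
    have h1 := hqd _ hE Y hYP
    rw [hfE] at h1
    have hz : vbracket (0 : PVF n) Y = 0 := by
      funext j
      simp [vbracket]
    rw [hz, zero_add] at h1
    have hfYc : ∀ k, ((f Y) k).IsHomogeneous d :=
      comps_homog (hf0 ((d : ℤ) - 1) Y hYP (homog_of_comps (by ring) hY)) (by ring)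
    rw [vbracket_euler_left hfYc, vbracket_euler_left hY, map_smul] at h1
    have hne : (d : ℝ) - 1 ≠ 0 := by
      have h2 : (d : ℝ) ≠ 1 := by exact_mod_cast hd
      exact sub_ne_zero.mpr h2
    have h3 := congrArg (fun z => ((d : ℝ) - 1)⁻¹ • z) h1
    simpa [smul_smul, inv_mul_cancel₀ hne] using h3.symm
  -- f = ad X₀ on homogeneous elements, by strong induction on the degree
  have key : ∀ d : ℕ, ∀ Y, Y ∈ P → (∀ k, (Y k).IsHomogeneous d) → f Y = vbracket X₀ Y := by
    intro d
    induction d using Nat.strong_induction_on with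
    | _ d ih =>
      rcases d with _ | e
      · intro Y hYP hYc
        exact hfneg1 Y hYc
      · intro Y hYP hYc
        have hfYc : ∀ k, ((f Y) k).IsHomogeneous (e + 1) :=
          comps_homog (hf0 (e : ℤ) Y hYP (homog_of_comps (by push_cast; ring) hYc))
            (by push_cast; ring)
        have hbYc : ∀ k, ((vbracket X₀ Y) k).IsHomogeneous (e + 1) :=
          vbracket_comps_homog (by omega) hX₀c hYc
        have hpd : ∀ (i : Fin n) k, pderiv i (f Y k - vbracket X₀ Y k) = 0 := by
          intro i k
          have hYP' : vbracket Y (constVF i) ∈ P := hbr _ hYP _ (hconst i)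
          have hYc' : ∀ kk, ((vbracket Y (constVF i)) kk).IsHomogeneous e :=
            vbracket_comps_homog (by omega) hYc (hconstc i)
          have hg : g (vbracket Y (constVF i)) = vbracket X₀ (vbracket Y (constVF i)) := by
            rcases eq_or_ne e 1 with he | he
            · subst he
              obtain ⟨A, hAP, B, hBP, hA0, hB0, hAB⟩ :=
                h11 Y hYP (homog_of_comps (by norm_num) hYc) (constVF i) (hconst i)
                  (hconstHomog i)
              have hAc := comps_homog hA0 (d := 1) (by norm_num)
              have hBc := comps_homog hB0 (d := 1) (by norm_num)
              rw [hAB, ← hqd A hAP B hBP, ih 1 (by omega) A hAP hAc,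
                ih 1 (by omega) B hBP hBc]
              exact (vbracket_leibniz X₀ A B).symm
            · rw [hgfd e he _ hYP' hYc', ih e (by omega) _ hYP' hYc']
          have h2 := hqd Y hYP (constVF i) (hconst i)
          have e2 : vbracket (f Y) (constVF i) k + vbracket Y (f (constVF i)) k
              = g (vbracket Y (constVF i)) k := by
            have := congrFun h2 k
            simpa using this
          have e3 : vbracket X₀ (vbracket Y (constVF i)) k
              = vbracket (vbracket X₀ Y) (constVF i) k
                + vbracket Y (vbracket X₀ (constVF i)) k := by
            have := congrFun (vbracket_leibniz X₀ Y (constVF i)) k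
            simpa using this
          have e4 : vbracket Y (vbracket X₀ (constVF i)) k
              = vbracket Y (f (constVF i)) k := by rw [hbrX₀const i]
          have e5 : g (vbracket Y (constVF i)) k
              = vbracket X₀ (vbracket Y (constVF i)) k := congrFun hg k
          have hsub : vbracket (f Y) (constVF i) k
              - vbracket (vbracket X₀ Y) (constVF i) k = 0 := by
            linear_combination e2 + e3 + e4 + e5
          have c1 := vbracket_const (f Y) i k
          have c2 := vbracket_const (vbracket X₀ Y) i k
          rw [map_sub]
          linear_combination c1 - c2 - hsub
        funext k
        have hWk : f Y k - vbracket X₀ Y k = 0 :=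
          homog_pos_pderiv_zero (by omega) ((hfYc k).sub (hbYc k)) (fun i => hpd i k)
        exact sub_eq_zero.mp hWk
  -- decomposition into homogeneous components
  have hmain : ∀ Z ∈ P, f Z = vbracket X₀ Z := by
    intro Z hZP
    set N := Finset.univ.sup (fun j : Fin n => (Z j).totalDegree) with hN
    set Zc : ℕ → PVF n := fun d j => homogeneousComponent d (Z j) with hZcdef
    have hZsum : ∑ d ∈ Finset.range (N + 1), Zc d = Z := by
      funext j
      rw [Finset.sum_apply]
      exact sum_homogComp_of_le
        (Finset.le_sup (f := fun j : Fin n => (Z j).totalDegree) (Finset.mem_univ j))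
    have hZcc : ∀ d k, ((Zc d) k).IsHomogeneous d := fun d k =>
      homogeneousComponent_isHomogeneous d (Z k)
    have hmem : ∀ d ∈ Finset.range (N + 1), Zc d ∈ P := by
      refine eig_mem P (adV (eulerVF n)) (fun x hx => hbr _ hE x hx) (N + 1) _
        (Finset.card_range _) Zc (fun d => (d : ℝ) - 1) ?_ ?_ ?_
      · intro a _ b _ hab
        have hab' : (a : ℝ) - 1 = (b : ℝ) - 1 := hab
        have h2 : (a : ℝ) = (b : ℝ) := by linarith
        exact_mod_cast h2
      · intro d _
        rw [adV_apply]
        exact vbracket_euler_left (hZcc d)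
      · rw [hZsum]
        exact hZP
    calc f Z = f (∑ d ∈ Finset.range (N + 1), Zc d) := by rw [hZsum]
    _ = ∑ d ∈ Finset.range (N + 1), f (Zc d) := map_sum f _ _
    _ = ∑ d ∈ Finset.range (N + 1), adV X₀ (Zc d) := by
          refine Finset.sum_congr rfl fun d hd => ?_
          rw [adV_apply]
          exact key d (Zc d) (hmem d hd) (hZcc d)
    _ = vbracket X₀ Z := by rw [← map_sum, hZsum, adV_apply]
  refine ⟨X₀, hX₀homog, hmain, ?_, ?_⟩
  · intro i hi Z hZP hZh
    rcases hZh with ⟨d, hd, hc⟩ | rfl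
    · have hd1 : d ≠ 1 := by omega
      rw [hgfd d hd1 Z hZP hc]
      exact hmain Z hZP
    · rw [map_zero, ← adV_apply, map_zero]
  · intro Z hZP W hWP
    rw [← hqd Z hZP W hWP, hmain Z hZP, hmain W hWP]
    exact (vbracket_leibniz X₀ Z W).symm
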